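/- Let a, b, c, d, e, f, g, h : ℝ → ℝ be smooth with f' > 0 and g ≠ 0 everywhere, and let A, B, C, D, E : ℝ → ℝ be differentiable and satisfy the degree-4 transformation identities (as in the context). Define I₀ = a, I₁ = 8ac − 3b², I₂ = 3(ab' − a'b) + ac² − 3abd + 12a²e, I₃ = 8aa'(4ac − 3b²) + 24a²bb' − 32a³c' − 3b⁵ + 64a³cd − 24a²b²d − 32a²bc² + 20ab³c, and let Ĩ₀, Ĩ₁, Ĩ₂, Ĩ₃ be the same expressions formed from (A,B,C,D,E). Then at every x with I₁(x) ≠ 0 one has Ĩ₁(f(x)) ≠ 0 and (Ĩ₂·Ĩ₀/Ĩ₁²)(f(x)) = (I₂·I₀/I₁²)(x) and (Ĩ₃/|Ĩ₁|^{5/2})(f(x)) = (I₃/|I₁|^{5/2})(x). That is, J₁ = I₂I₀/I₁² and J₂ = I₃/|I₁|^{5/2} are absolute differential invariants of generalized Abel equations of degree 4. -/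

import Mathlib

/-- The relative invariant `I₁ = 8ac − 3b²` of degree-4 generalized Abel
equations. -/
noncomputable def abel4I1 (a b c : ℝ → ℝ) : ℝ → ℝ := fun x =>
  8 * a x * c x - 3 * b x ^ 2

/-- The relative invariant `I₂ = 3(ab' − a'b) + ac² − 3abd + 12a²e`. -/
noncomputable def abel4I2 (a b c d e : ℝ → ℝ) : ℝ → ℝ := fun x =>
  3 * (a x * deriv b x - deriv a x * b x) + a x * c x ^ 2
    - 3 * a x * b x * d x + 12 * a x ^ 2 * e x

/-- The relative invariant
`I₃ = 8aa'(4ac − 3b²) + 24a²bb' − 32a³c' − 3b⁵ + 64a³cd − 24a²b²d − 32a²bc²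
+ 20ab³c`. -/
noncomputable def abel4I3 (a b c d : ℝ → ℝ) : ℝ → ℝ := fun x =>
  8 * a x * deriv a x * (4 * a x * c x - 3 * b x ^ 2)
    + 24 * a x ^ 2 * b x * deriv b x - 32 * a x ^ 3 * deriv c x
    - 3 * b x ^ 5 + 64 * a x ^ 3 * c x * d x - 24 * a x ^ 2 * b x ^ 2 * d x
    - 32 * a x ^ 2 * b x * c x ^ 2 + 20 * a x * b x ^ 3 * c x

set_option maxHeartbeats 4000000 in
lemma deriv_comp_eq_aux (A f : ℝ → ℝ) {P : ℝ → ℝ} (hA : Differentiable ℝ A)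
    (hfd : Differentiable ℝ f) (x : ℝ) (hF : deriv f x ≠ 0) {p : ℝ}
    (hP : HasDerivAt P p x) (hEq : ∀ y, A (f y) = P y) :
    deriv A (f x) = p / deriv f x := by
  have h1 : HasDerivAt (fun y => A (f y)) (deriv A (f x) * deriv f x) x :=
    ((hA (f x)).hasDerivAt).comp x (hfd x).hasDerivAt
  have h2 : HasDerivAt P (deriv A (f x) * deriv f x) x := by
    have he : (fun y => A (f y)) = P := funext hEq
    rwa [he] at h1
  rw [eq_div_iff hF]
  exact h2.unique hP

set_option maxHeartbeats 4000000 in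
/-- `J₁ = I₂I₀/I₁²` and `J₂ = I₃/|I₁|^{5/2}` (with `I₀ = a`) are
absolute differential invariants of generalized Abel equations of degree 4. -/
theorem abel_deg4_absolute_invariants
    (a b c d e f g h A B C D E : ℝ → ℝ)
    (ha : ContDiff ℝ (⊤ : ℕ∞) a) (hb : ContDiff ℝ (⊤ : ℕ∞) b)
    (hc : ContDiff ℝ (⊤ : ℕ∞) c) (hd : ContDiff ℝ (⊤ : ℕ∞) d)
    (he : ContDiff ℝ (⊤ : ℕ∞) e)
    (hf : ContDiff ℝ (⊤ : ℕ∞) f) (hg : ContDiff ℝ (⊤ : ℕ∞) g)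
    (hh : ContDiff ℝ (⊤ : ℕ∞) h)
    (hf' : ∀ x, 0 < deriv f x) (hg0 : ∀ x, g x ≠ 0)
    (hA : Differentiable ℝ A) (hB : Differentiable ℝ B)
    (hC : Differentiable ℝ C) (hD : Differentiable ℝ D)
    (hE : Differentiable ℝ E)
    (hAe : ∀ x, A (f x) = a x / (deriv f x * g x ^ 3))
    (hBe : ∀ x, B (f x) = (b x * g x - 4 * a x * h x) / (deriv f x * g x ^ 3))
    (hCe : ∀ x, C (f x) = (6 * a x * h x ^ 2 - 3 * b x * g x * h x
      + c x * g x ^ 2) / (deriv f x * g x ^ 3))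
    (hDe : ∀ x, D (f x) = (-4 * a x * h x ^ 3 + 3 * b x * g x * h x ^ 2
      - 2 * c x * g x ^ 2 * h x + d x * g x ^ 3 + deriv g x * g x ^ 2)
      / (deriv f x * g x ^ 3))
    (hEe : ∀ x, E (f x) = (a x * h x ^ 4 - b x * g x * h x ^ 3
      + c x * g x ^ 2 * h x ^ 2 - d x * g x ^ 3 * h x + e x * g x ^ 4
      + deriv h x * g x ^ 3 - deriv g x * g x ^ 2 * h x)
      / (deriv f x * g x ^ 3)) :
    ∀ x, abel4I1 a b c x ≠ 0 →
      abel4I1 A B C (f x) ≠ 0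
      ∧ abel4I2 A B C D E (f x) * A (f x) / abel4I1 A B C (f x) ^ 2
        = abel4I2 a b c d e x * a x / abel4I1 a b c x ^ 2
      ∧ abel4I3 A B C D (f x) / |abel4I1 A B C (f x)| ^ ((5:ℝ)/2)
        = abel4I3 a b c d x / |abel4I1 a b c x| ^ ((5:ℝ)/2) := by
  have had : Differentiable ℝ a := ha.differentiable (by simp)
  have hbd : Differentiable ℝ b := hb.differentiable (by simp)
  have hcd : Differentiable ℝ c := hc.differentiable (by simp)
  have hfd : Differentiable ℝ f := hf.differentiable (by simp)
  have hgd : Differentiable ℝ g := hg.differentiable (by simp)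
  have hhd : Differentiable ℝ h := hh.differentiable (by simp)
  have hf'd : Differentiable ℝ (deriv f) :=
    (contDiff_infty_iff_deriv.mp hf).2.differentiable (by simp)
  intro x hI1
  have hF : deriv f x ≠ 0 := (hf' x).ne'
  have hG : g x ≠ 0 := hg0 x
  have hden0 : deriv f x * g x ^ 3 ≠ 0 := mul_ne_zero hF (pow_ne_zero _ hG)
  -- derivatives of powers of g and h
  have hg2 : HasDerivAt (fun y => g y ^ 2) (2 * g x * deriv g x) x := by
    simpa using ((hgd x).hasDerivAt.fun_pow 2)
  have hg3 : HasDerivAt (fun y => g y ^ 3) (3 * g x ^ 2 * deriv g x) x := by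
    simpa using ((hgd x).hasDerivAt.fun_pow 3)
  have hh2 : HasDerivAt (fun y => h y ^ 2) (2 * h x * deriv h x) x := by
    simpa using ((hhd x).hasDerivAt.fun_pow 2)
  have hden : HasDerivAt (fun y => deriv f y * g y ^ 3)
      (deriv (deriv f) x * g x ^ 3 + deriv f x * (3 * g x ^ 2 * deriv g x)) x :=
    (hf'd x).hasDerivAt.mul hg3
  -- deriv A (f x)
  have hA' := deriv_comp_eq_aux A f hA hfd x hF
      ((had x).hasDerivAt.div hden hden0) hAe
  -- deriv B (f x)
  have hB' := deriv_comp_eq_aux B f hB hfd x hF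
      ((((hbd x).hasDerivAt.mul (hgd x).hasDerivAt).sub
        (((had x).hasDerivAt.const_mul 4).mul (hhd x).hasDerivAt)).div hden hden0) hBe
  -- deriv C (f x)
  have hC' := deriv_comp_eq_aux C f hC hfd x hF
      (((((((had x).hasDerivAt.const_mul 6).mul hh2).sub
        ((((hbd x).hasDerivAt.const_mul 3).mul (hgd x).hasDerivAt).mul
          (hhd x).hasDerivAt)).add ((hcd x).hasDerivAt.mul hg2)).div hden hden0)) hCe
  have hg2pos : (0:ℝ) < g x ^ 2 :=
    lt_of_le_of_ne (sq_nonneg _) (Ne.symm (pow_ne_zero 2 hG))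
  have key1 : abel4I1 A B C (f x) = abel4I1 a b c x / ((deriv f x)^2 * g x ^ 4) := by
    simp only [abel4I1, hAe, hBe, hCe]
    field_simp
    ring
  have key2 : abel4I2 A B C D E (f x)
      = abel4I2 a b c d e x / ((deriv f x)^3 * g x ^ 5) := by
    simp only [abel4I2, hAe, hBe, hCe, hDe, hEe, hA', hB', Pi.mul_apply, Pi.sub_apply, Pi.add_apply]
    field_simp
    ring
  have key3 : abel4I3 A B C D (f x)
      = abel4I3 a b c d x / ((deriv f x)^5 * g x ^ 10) := by
    simp only [abel4I3, hAe, hBe, hCe, hDe, hA', hB', hC', Pi.mul_apply, Pi.sub_apply, Pi.add_apply]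
    field_simp
    ring
  have hFG4 : (0:ℝ) < (deriv f x)^2 * g x ^ 4 := by
    have := mul_pos (pow_pos (hf' x) 2) (mul_pos hg2pos hg2pos)
    calc (0:ℝ) < deriv f x ^ 2 * (g x ^ 2 * g x ^ 2) := this
    _ = (deriv f x)^2 * g x ^ 4 := by ring
  refine ⟨?_, ?_, ?_⟩
  · rw [key1]
    exact div_ne_zero hI1 hFG4.ne'
  · rw [key1, key2, hAe x]
    field_simp
  · rw [key1, key3]
    have hpos : (0:ℝ) < deriv f x * g x ^ 2 := mul_pos (hf' x) hg2pos
    have h2 : (deriv f x)^2 * g x ^4 = (deriv f x * g x^2)^2 := by ring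
    rw [h2, abs_div, abs_of_pos (pow_pos hpos 2),
      Real.div_rpow (abs_nonneg _) (pow_pos hpos 2).le]
    have hrp : (((deriv f x * g x ^ 2)^2 : ℝ)) ^ ((5:ℝ)/2)
        = (deriv f x * g x ^ 2)^(5:ℕ) := by
      rw [← Real.rpow_natCast (deriv f x * g x ^ 2) 2, ← Real.rpow_mul hpos.le]
      norm_num
    rw [hrp]
    have hI1p : (0:ℝ) < |abel4I1 a b c x| ^ ((5:ℝ)/2) :=
      Real.rpow_pos_of_pos (abs_pos.mpr hI1) _
    rw [div_div_div_eq]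
    rw [div_eq_div_iff (by positivity) hI1p.ne']
    ring
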